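/- (Theorem 11.2, Discretization, for D = 𝔻.) Let Γ be a cocompact Fuchsian group, z₀ ∈ 𝔻 a point with trivial stabilizer, V = Γ·z₀, and P : 𝔻 × V → (0,1) a Lyons–Sullivan discretization kernel; set μ(γ) := P(γ·z₀, z₀) for γ ∈ Γ. Let X be a compact metrizable space on which Γ acts by homeomorphisms. Then the restriction map R, sending f̃ to the function x ↦ f̃(z₀, x), is a bijection from the set of Γ-invariant leafwise harmonic functions f̃ : 𝔻 × X → ℝ (all of which are automatically bounded) onto the set of continuous functions Φ : X → ℝ satisfying Φ(x) = Σ_{γ∈Γ} μ(γ) Φ(γ·x) for all x ∈ X. Furthermore, f̃(z,x) is independent of z ∈ 𝔻 if and only if R f̃ is Γ-invariant (R f̃(γ·x) = R f̃(x) for all γ, x). -/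

import Mathlib

open Metric Set Filter

noncomputable section

/-- The open unit disc in `ℂ`. -/
def unitDisc : Set ℂ := Metric.ball 0 1

/-- A function `f : ℂ → ℝ` is harmonic on a set `U ⊆ ℂ` if, locally on `U`, it is
the real part of a holomorphic function (for open `U` this is equivalent to being
`C²` with vanishing Laplacian). -/
def HarmonicOnSet (f : ℂ → ℝ) (U : Set ℂ) : Prop :=
  ∀ z ∈ U, ∃ r > 0, Metric.ball z r ⊆ U ∧
    ∃ g : ℂ → ℂ, DifferentiableOn ℂ g (Metric.ball z r) ∧
      ∀ w ∈ Metric.ball z r, f w = (g w).re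

/-- `ρ` is a cocompact Fuchsian group action of `Γ` on the open unit disc: a faithful,
properly discontinuous, cocompact action by Möbius transformations
`z ↦ (αz+β)/(β̄z+ᾱ)` with `|α|² - |β|² = 1`. -/
structure IsCocompactFuchsian (Γ : Type*) [Group Γ] (ρ : Γ → ℂ → ℂ) : Prop where
  one_act : ∀ z ∈ unitDisc, ρ 1 z = z
  mul_act : ∀ γ₁ γ₂ : Γ, ∀ z ∈ unitDisc, ρ (γ₁ * γ₂) z = ρ γ₁ (ρ γ₂ z)
  maps_disc : ∀ γ : Γ, ∀ z ∈ unitDisc, ρ γ z ∈ unitDisc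
  moebius : ∀ γ : Γ, ∃ α β : ℂ, ‖α‖ ^ 2 - ‖β‖ ^ 2 = 1 ∧
    ∀ z ∈ unitDisc, ρ γ z = (α * z + β) / ((starRingEnd ℂ) β * z + (starRingEnd ℂ) α)
  faithful : ∀ γ : Γ, (∀ z ∈ unitDisc, ρ γ z = z) → γ = 1
  properly_discontinuous : ∀ K : Set ℂ, K ⊆ unitDisc → IsCompact K →
    {γ : Γ | ((ρ γ '' K) ∩ K).Nonempty}.Finite
  cocompact : ∃ K : Set ℂ, K ⊆ unitDisc ∧ IsCompact K ∧ ∀ z ∈ unitDisc, ∃ γ : Γ, ρ γ z ∈ K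

/-- `σ` is an action of the group `Γ` on the topological space `X` by homeomorphisms. -/
structure IsActionByHomeomorphisms (Γ : Type*) [Group Γ] (X : Type*) [TopologicalSpace X]
    (σ : Γ → X → X) : Prop where
  one_act : ∀ x : X, σ 1 x = x
  mul_act : ∀ γ₁ γ₂ : Γ, ∀ x : X, σ (γ₁ * γ₂) x = σ γ₁ (σ γ₂ x)
  continuous_act : ∀ γ : Γ, Continuous (σ γ)

/-- `H` is a bounded harmonic function on the open unit disc. -/
def IsBoundedHarmonic (H : ℂ → ℝ) : Prop :=
  HarmonicOnSet H unitDisc ∧ ∃ M : ℝ, ∀ z ∈ unitDisc, |H z| ≤ M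

/-- `f` is a `Γ`-invariant leafwise harmonic function on `𝔻 × X`: it is continuous on
`𝔻 × X`, harmonic in the disc variable for each fixed `x`, and invariant under the
diagonal `Γ`-action. -/
def IsInvariantLeafwiseHarmonic {Γ : Type*} [Group Γ] (ρ : Γ → ℂ → ℂ)
    {X : Type*} [TopologicalSpace X] (σ : Γ → X → X) (f : ℂ → X → ℝ) : Prop :=
  ContinuousOn (fun p : ℂ × X => f p.1 p.2) (unitDisc ×ˢ (univ : Set X)) ∧
  (∀ x : X, HarmonicOnSet (fun z => f z x) unitDisc) ∧
  (∀ γ : Γ, ∀ z ∈ unitDisc, ∀ x : X, f (ρ γ z) (σ γ x) = f z x)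

lemma deriv_eq_of_re_eq {g₁ g₂ : ℂ → ℂ} {V : Set ℂ} (hV : IsOpen V)
    (h₁ : DifferentiableOn ℂ g₁ V) (h₂ : DifferentiableOn ℂ g₂ V)
    (hre : ∀ w ∈ V, (g₁ w).re = (g₂ w).re) {w : ℂ} (hw : w ∈ V) :
    deriv g₁ w = deriv g₂ w := by
  have d₁ : DifferentiableAt ℂ g₁ w := h₁.differentiableAt (hV.mem_nhds hw)
  have d₂ : DifferentiableAt ℂ g₂ w := h₂.differentiableAt (hV.mem_nhds hw)
  set d : ℂ := deriv g₁ w - deriv g₂ w with hd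
  have hφ : HasDerivAt (fun z => g₁ z - g₂ z) d w := (d₁.hasDerivAt.sub d₂.hasDerivAt)
  have hF : HasFDerivAt (fun z => g₁ z - g₂ z)
      ((ContinuousLinearMap.smulRight (1 : ℂ →L[ℂ] ℂ) d)) w := hφ.hasFDerivAt
  have hFr : HasFDerivAt (fun z => g₁ z - g₂ z)
      (((ContinuousLinearMap.smulRight (1 : ℂ →L[ℂ] ℂ) d)).restrictScalars ℝ) w :=
    hF.restrictScalars ℝ
  have hre' : HasFDerivAt (fun z => ((g₁ z - g₂ z) : ℂ).re)
      (Complex.reCLM.comp (((ContinuousLinearMap.smulRight (1 : ℂ →L[ℂ] ℂ) d)).restrictScalars ℝ)) w :=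
    (Complex.reCLM.hasFDerivAt).comp w hFr
  have hzero : HasFDerivAt (fun z => ((g₁ z - g₂ z) : ℂ).re) (0 : ℂ →L[ℝ] ℝ) w := by
    have hev : (fun z => ((g₁ z - g₂ z) : ℂ).re) =ᶠ[nhds w] (fun _ => (0:ℝ)) := by
      filter_upwards [hV.mem_nhds hw] with z hz
      simp [Complex.sub_re, hre z hz]
    exact (hasFDerivAt_const (0:ℝ) w).congr_of_eventuallyEq hev
  have heq := hre'.unique hzero
  have h1 : Complex.re ((1:ℂ) • d) = 0 := by
    have := congrFun (congrArg DFunLike.coe heq) (1:ℂ)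
    simpa using this
  have hI : Complex.re (Complex.I • d) = 0 := by
    have := congrFun (congrArg DFunLike.coe heq) Complex.I
    simpa using this
  have : d = 0 := by
    apply Complex.ext
    · simpa using h1
    · have : (Complex.I * d).re = 0 := by simpa [smul_eq_mul] using hI
      simpa [Complex.mul_re] using this
  have := sub_eq_zero.mp (hd ▸ this)
  exact this

lemma exists_primitive {G : ℂ → ℂ} {c : ℂ} {R : ℝ} (hR : 0 < R)
    (hG : DifferentiableOn ℂ G (ball c R)) :
    ∃ g : ℂ → ℂ, DifferentiableOn ℂ g (ball c (R/2)) ∧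
      ∀ z ∈ ball c (R/2), HasDerivAt g (G z) z := by
  set Rn : NNReal := (3*R/4).toNNReal with hRn
  have hRnco : (Rn : ℝ) = 3*R/4 := Real.coe_toNNReal _ (by positivity)
  have hRn0 : (0:NNReal) < Rn := by
    rw [← NNReal.coe_lt_coe, hRnco]; positivity
  have hG' : DifferentiableOn ℂ G (closedBall c (Rn : ℝ)) := by
    apply hG.mono
    intro w hw
    rw [mem_closedBall] at hw
    rw [mem_ball]
    rw [hRnco] at hw
    linarith
  have hps : HasFPowerSeriesOnBall G (cauchyPowerSeries G c Rn) c Rn :=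
    hG'.hasFPowerSeriesOnBall hRn0
  set p := cauchyPowerSeries G c Rn with hp
  have hco : ((R/2).toNNReal : ℝ) = R/2 := Real.coe_toNNReal _ (by positivity)
  have hhalf : (((R/2).toNNReal : NNReal) : ENNReal) < p.radius := by
    refine lt_of_lt_of_le ?_ hps.r_le
    rw [ENNReal.coe_lt_coe, ← NNReal.coe_lt_coe, hco, hRnco]
    linarith
  have hsum : Summable (fun n => ‖p n‖ * ((R/2) : ℝ) ^ n) := by
    have := p.summable_norm_mul_pow hhalf
    rwa [hco] at this
  set F : ℕ → ℂ → ℂ := fun n w => (p.coeff n / (n+1)) * (w - c)^(n+1) with hF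
  set u : ℕ → ℝ := fun n => (‖p n‖ * (R/2) ^ n) * (R/2) with hu
  have hsum' : Summable u := hsum.mul_right _
  have hFd : ∀ n, DifferentiableOn ℂ (F n) (ball c (R/2)) := by
    intro n
    apply DifferentiableOn.const_mul
    exact (DifferentiableOn.pow (differentiableOn_id.sub (differentiableOn_const c)) _)
  have hn1 : ∀ n : ℕ, (1:ℝ) ≤ ‖((n:ℂ)+1)‖ := by
    intro n
    have h4 : ((n:ℂ)+1) = ((n+1 : ℕ) : ℂ) := by push_cast; ring
    rw [h4, Complex.norm_natCast]
    exact_mod_cast Nat.le_add_left 1 n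
  have hFle : ∀ (n : ℕ) (w : ℂ), w ∈ ball c (R/2) → ‖F n w‖ ≤ u n := by
    intro n w hw
    have h1 : ‖p.coeff n‖ ≤ ‖p n‖ :=
      le_of_eq (FormalMultilinearSeries.norm_apply_eq_norm_coef).symm
    have h2 : ‖w - c‖ ≤ R/2 := by
      rw [mem_ball, dist_eq_norm] at hw; exact hw.le
    have h3 : ‖p.coeff n / (n+1)‖ ≤ ‖p n‖ := by
      rw [norm_div]
      calc ‖p.coeff n‖ / ‖((n:ℂ)+1)‖ ≤ ‖p.coeff n‖ / 1 :=
            div_le_div_of_nonneg_left (norm_nonneg _) one_pos (hn1 n) |>.trans (le_refl _)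
          _ = ‖p.coeff n‖ := div_one _
          _ ≤ ‖p n‖ := h1
    calc ‖F n w‖ = ‖p.coeff n / (n+1)‖ * ‖(w-c)^(n+1)‖ := by rw [hF]; simp [norm_mul]
      _ ≤ ‖p n‖ * (R/2)^(n+1) := by
          apply mul_le_mul h3 ?_ (by positivity) (by positivity)
          rw [norm_pow]
          exact pow_le_pow_left₀ (norm_nonneg _) h2 _
      _ = u n := by rw [hu]; ring
  refine ⟨fun w => ∑' n, F n w, ?_, ?_⟩
  · exact Complex.differentiableOn_tsum_of_summable_norm hsum' hFd isOpen_ball hFle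
  · intro z hz
    have hda : DifferentiableAt ℂ (fun w => ∑' n, F n w) z :=
      (Complex.differentiableOn_tsum_of_summable_norm hsum' hFd isOpen_ball hFle).differentiableAt
        (isOpen_ball.mem_nhds hz)
    have hds : HasSum (fun n => deriv (F n) z) (deriv (fun w => ∑' n, F n w) z) :=
      Complex.hasSum_deriv_of_summable_norm hsum' hFd isOpen_ball hFle hz
    have hder : ∀ n, deriv (F n) z = p.coeff n * (z - c)^n := by
      intro n
      have hpow : HasDerivAt (fun w : ℂ => (w - c)^(n+1)) (((n+1 : ℕ) : ℂ) * (z - c)^n * 1) z := by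
        have hb : HasDerivAt (fun w : ℂ => w - c) 1 z := (hasDerivAt_id z).sub_const c
        have := (hasDerivAt_pow (n+1) (z - c)).comp z hb
        simpa [Function.comp_def] using this
      have h : HasDerivAt (F n) ((p.coeff n / (n+1)) * (((n+1:ℕ):ℂ) * (z - c)^n * 1)) z :=
        hpow.const_mul (p.coeff n / (n+1))
      have hne : ((n:ℂ)+1) ≠ 0 := by
        exact_mod_cast (Nat.cast_add_one_ne_zero (R := ℂ) n)
      rw [h.deriv]
      push_cast
      field_simp
    have hzs : HasSum (fun n => p.coeff n * (z - c)^n) (G z) := by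
      have hmem : z - c ∈ Metric.eball (0:ℂ) Rn := by
        rw [Metric.mem_eball, edist_zero_right, enorm_eq_nnnorm]
        have h5 : ‖z - c‖ < R/2 := by rw [mem_ball, dist_eq_norm] at hz; exact hz
        have h6 : ‖z - c‖ < (Rn : ℝ) := by rw [hRnco]; linarith
        exact_mod_cast h6
      have h0 := hps.hasSum hmem
      have h3 : c + (z - c) = z := by ring
      rw [h3] at h0
      have hfun : (fun n => p.coeff n * (z - c)^n) = (fun n => (p n) fun _ => z - c) := by
        funext n
        rw [FormalMultilinearSeries.apply_eq_pow_smul_coeff, smul_eq_mul]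
        ring
      rw [hfun]
      exact h0
    have hfin : deriv (fun w => ∑' n, F n w) z = G z := by
      apply HasSum.unique _ hzs
      convert hds using 2 with n
      exact (hder n).symm
    exact hfin ▸ hda.hasDerivAt

lemma harmonic_rep {H : ℂ → ℝ} (hH : HarmonicOnSet H unitDisc) {c : ℂ} {R : ℝ}
    (hR : 0 < R) (hsub : ball c R ⊆ unitDisc) :
    ∃ g : ℂ → ℂ, DifferentiableOn ℂ g (ball c (R/2)) ∧
      ∀ z ∈ ball c (R/2), H z = (g z).re := by
  classical
  choose! r hrpos hrsub gc hgcd hgcre using hH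
  -- glued derivative
  set G : ℂ → ℂ := fun w => deriv (gc w) w with hG
  -- welldefinedness: on each chart, G agrees with the chart derivative
  have hwd : ∀ z ∈ unitDisc, ∀ w ∈ ball z (r z), G w = deriv (gc z) w := by
    intro z hz w hw
    have hwU : w ∈ unitDisc := hrsub z hz hw
    have hVopen : IsOpen (ball z (r z) ∩ ball w (r w)) := isOpen_ball.inter isOpen_ball
    have hwV : w ∈ ball z (r z) ∩ ball w (r w) :=
      ⟨hw, mem_ball_self (hrpos w hwU)⟩
    exact deriv_eq_of_re_eq hVopen
      ((hgcd w hwU).mono inter_subset_right) ((hgcd z hz).mono inter_subset_left)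
      (fun v hv => by rw [← hgcre w hwU v hv.2, ← hgcre z hz v hv.1]) hwV
  have hGd : DifferentiableOn ℂ G (ball c R) := by
    intro w hw
    have hwU : w ∈ unitDisc := hsub hw
    have h1 : DifferentiableOn ℂ (deriv (gc w)) (ball w (r w)) :=
      (((hgcd w hwU).analyticOnNhd isOpen_ball).deriv).differentiableOn
    have h2 : DifferentiableAt ℂ (deriv (gc w)) w :=
      h1.differentiableAt (isOpen_ball.mem_nhds (mem_ball_self (hrpos w hwU)))
    have h3 : G =ᶠ[nhds w] deriv (gc w) := by
      filter_upwards [isOpen_ball.mem_nhds (mem_ball_self (hrpos w hwU))] with v hv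
      exact hwd w hwU v hv
    exact (h2.congr_of_eventuallyEq h3).differentiableWithinAt
  obtain ⟨g₀, hg₀d, hg₀der⟩ := exists_primitive hR hGd
  -- the difference H - Re g₀ is locally constant on ball c (R/2)
  have hloc : ∀ z ∈ ball c (R/2), ∀ᶠ w in nhds z, H w - (g₀ w).re = H z - (g₀ z).re := by
    intro z hz
    have hzU : z ∈ unitDisc := hsub (ball_subset_ball (by linarith) hz)
    set ε : ℝ := min (r z) (R/2 - dist z c) with hε
    have hεpos : 0 < ε := lt_min (hrpos z hzU) (by rw [mem_ball] at hz; linarith)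
    have hsub1 : ball z ε ⊆ ball z (r z) := ball_subset_ball (min_le_left _ _)
    have hsub2 : ball z ε ⊆ ball c (R/2) := by
      intro v hv
      rw [mem_ball] at hv ⊢
      calc dist v c ≤ dist v z + dist z c := dist_triangle _ _ _
        _ < ε + dist z c := by linarith
        _ ≤ R/2 := by have h7 : ε ≤ R/2 - dist z c := hε ▸ min_le_right _ _; linarith
    filter_upwards [isOpen_ball.mem_nhds (mem_ball_self hεpos)] with w hw
    -- h := gc z - g₀ has zero derivative on convex ball z ε
    have key : ∀ v ∈ ball z ε, HasDerivWithinAt (fun w => gc z w - g₀ w) 0 (ball z ε) v := by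
      intro v hv
      have hv1 : v ∈ ball z (r z) := hsub1 hv
      have hd1 : HasDerivAt (gc z) (G v) v := by
        have := (hgcd z hzU).differentiableAt (isOpen_ball.mem_nhds hv1)
        have h4 := this.hasDerivAt
        rwa [← hwd z hzU v hv1] at h4
      have hd2 : HasDerivAt g₀ (G v) v := hg₀der v (hsub2 hv)
      have := (hd1.sub hd2).hasDerivWithinAt (s := ball z ε)
      rwa [sub_self] at this
    have hcon := Convex.norm_image_sub_le_of_norm_hasDerivWithin_le key
      (fun v _ => le_of_eq norm_zero) (convex_ball z ε) (mem_ball_self hεpos) hw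
    have hzero : gc z w - g₀ w = gc z z - g₀ z := by
      rw [zero_mul] at hcon
      exact sub_eq_zero.mp (norm_le_zero_iff.mp hcon)
    have hre : (gc z w).re - (g₀ w).re = (gc z z).re - (g₀ z).re := by
      have := congrArg Complex.re hzero
      simpa [Complex.sub_re] using this
    rw [← hgcre z hzU w (hsub1 hw), ← hgcre z hzU z (mem_ball_self (hrpos z hzU))] at hre
    linarith
  -- hence constant on the (convex) ball
  have hconst : ∀ z ∈ ball c (R/2), H z - (g₀ z).re = H c - (g₀ c).re := by
    intro z hz
    have hder0 : ∀ v ∈ ball c (R/2), HasFDerivWithinAt (fun w => H w - (g₀ w).re)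
        (0 : ℂ →L[ℝ] ℝ) (ball c (R/2)) v := by
      intro v hv
      have := (hasFDerivAt_const (𝕜 := ℝ) (H v - (g₀ v).re) v).congr_of_eventuallyEq
        ((hloc v hv).mono fun w hw => hw)
      exact this.hasFDerivWithinAt
    have hcpos : 0 < R/2 := by linarith
    have := Convex.norm_image_sub_le_of_norm_hasFDerivWithin_le (𝕜 := ℝ) (C := 0) hder0
      (fun v _ => norm_zero.le) (convex_ball c (R/2)) (mem_ball_self hcpos) hz
    rw [zero_mul] at this
    have h8 := sub_eq_zero.mp (norm_le_zero_iff.mp this)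
    linarith
  refine ⟨fun w => g₀ w + Complex.ofReal (H c - (g₀ c).re), ?_, ?_⟩
  · exact hg₀d.add_const _
  · intro z hz
    have := hconst z hz
    simp only [Complex.add_re, Complex.ofReal_re]
    linarith

lemma exp_lower {a b t : ℝ} (ha : -t ≤ a) (hb : -t ≤ b) :
    |a - b| ≤ Real.exp t * |Real.exp a - Real.exp b| := by
  wlog h : b ≤ a generalizing a b
  · have := this hb ha (by linarith)
    rwa [abs_sub_comm a b, abs_sub_comm (Real.exp a) (Real.exp b)]
  have h1 : Real.exp b * (a - b) ≤ Real.exp a - Real.exp b := by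
    have h0 := Real.add_one_le_exp (a - b)
    have hab : Real.exp a = Real.exp b * Real.exp (a - b) := by
      rw [← Real.exp_add]; ring_nf
    nlinarith [Real.exp_pos b]
  have h2 : (1:ℝ) ≤ Real.exp t * Real.exp b := by
    rw [← Real.exp_add]
    have : (0:ℝ) ≤ t + b := by linarith
    calc (1:ℝ) = Real.exp 0 := (Real.exp_zero).symm
      _ ≤ Real.exp (t + b) := Real.exp_le_exp.mpr this
  have h3 : Real.exp b ≤ Real.exp a := Real.exp_le_exp.mpr h
  rw [abs_of_nonneg (by linarith), abs_of_nonneg (by linarith)]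
  nlinarith [Real.exp_pos t]

/-- Uniform interior Lipschitz estimate for harmonic functions bounded by `M`. -/

lemma harmonic_lipschitz {H : ℂ → ℝ} (hH : HarmonicOnSet H unitDisc) {M : ℝ}
    (hb : ∀ w ∈ unitDisc, |H w| ≤ M) {c : ℂ} {R : ℝ} (hR : 0 < R)
    (hsub : ball c R ⊆ unitDisc) {z z' : ℂ} (hz : z ∈ ball c (R/8)) (hz' : z' ∈ ball c (R/8)) :
    |H z - H z'| ≤ Real.exp (2*M+1) * (4 / R) * dist z z' := by
  obtain ⟨g, hgd, hgre⟩ := harmonic_rep hH hR hsub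
  set F : ℂ → ℂ := fun w => Complex.exp (g w - ((M:ℂ)+1)) with hF
  have hb2 : ball z' (R/4) ⊆ ball c (R/2) := by
    intro w hw
    rw [mem_ball] at hw hz' ⊢
    calc dist w c ≤ dist w z' + dist z' c := dist_triangle _ _ _
      _ < R/4 + R/8 := by linarith
      _ ≤ R/2 := by linarith
  have hFd : DifferentiableOn ℂ F (ball z' (R/4)) := by
    apply DifferentiableOn.cexp
    exact (hgd.mono hb2).sub_const _
  have hFnorm : ∀ w ∈ ball z' (R/4), ‖F w‖ = Real.exp (H w - (M+1)) := by
    intro w hw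
    rw [hF]
    rw [Complex.norm_exp]
    congr 1
    have : w ∈ ball c (R/2) := hb2 hw
    rw [hgre w this]
    simp [Complex.sub_re, Complex.add_re]
  have hballs : ∀ w ∈ ball z' (R/4), w ∈ unitDisc := by
    intro w hw
    exact hsub (ball_subset_ball (by linarith) (hb2 hw))
  have hFsmall : ∀ w ∈ ball z' (R/4), ‖F w‖ ≤ Real.exp (-1) := by
    intro w hw
    rw [hFnorm w hw]
    apply Real.exp_le_exp.mpr
    have := (abs_le.mp (hb w (hballs w hw))).2
    linarith
  have hexp1 : Real.exp (-1 : ℝ) < 1/2 := by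
    have h9 := Real.exp_one_gt_d9
    rw [Real.exp_neg, inv_lt_comm₀ (Real.exp_pos 1) (by norm_num : (0:ℝ) < 1/2)]
    norm_num
    linarith
  have hz'm : z' ∈ ball z' (R/4) := mem_ball_self (by linarith)
  have hmaps : MapsTo F (ball z' (R/4)) (ball (F z') 1) := by
    intro w hw
    rw [mem_ball]
    calc dist (F w) (F z') ≤ ‖F w‖ + ‖F z'‖ := dist_le_norm_add_norm _ _
      _ ≤ Real.exp (-1) + Real.exp (-1) := add_le_add (hFsmall w hw) (hFsmall z' hz'm)
      _ < 1 := by linarith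
  have hzmem : z ∈ ball z' (R/4) := by
    rw [mem_ball] at hz hz' ⊢
    calc dist z z' ≤ dist z c + dist c z' := dist_triangle _ _ _
      _ < R/8 + R/8 := by rw [dist_comm c z']; linarith
      _ ≤ R/4 := by linarith
  have hschwarz := Complex.dist_le_div_mul_dist_of_mapsTo_ball hFd (hmaps.mono_right ball_subset_closedBall) hzmem
  -- lower bound
  have hHb : ∀ w ∈ ball z' (R/4), -(2*M+1) ≤ H w - (M+1) := by
    intro w hw
    have := (abs_le.mp (hb w (hballs w hw))).1
    linarith
  have Hlow := exp_lower (hHb z hzmem) (hHb z' hz'm)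
  have hnormdiff : |Real.exp (H z - (M+1)) - Real.exp (H z' - (M+1))| ≤ dist (F z) (F z') := by
    rw [← hFnorm z hzmem, ← hFnorm z' hz'm, dist_eq_norm]
    exact abs_norm_sub_norm_le _ _
  have hHz : |H z - H z'| = |(H z - (M+1)) - (H z' - (M+1))| := by ring_nf
  calc |H z - H z'| ≤ Real.exp (2*M+1) * |Real.exp (H z - (M+1)) - Real.exp (H z' - (M+1))| := by
        rw [hHz]; exact Hlow
    _ ≤ Real.exp (2*M+1) * dist (F z) (F z') := by
        apply mul_le_mul_of_nonneg_left hnormdiff (Real.exp_pos _).le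
    _ ≤ Real.exp (2*M+1) * (1 / (R/4) * dist z z') := by
        apply mul_le_mul_of_nonneg_left hschwarz (Real.exp_pos _).le
    _ = Real.exp (2*M+1) * (4/R) * dist z z' := by
        field_simp

/-- **Theorem 11.2 (Discretization, D = 𝔻).** Let `Γ` be a cocompact Fuchsian group,
`z₀ ∈ 𝔻` with trivial stabilizer, `P` a Lyons–Sullivan discretization kernel on
`𝔻 × Γ·z₀` (encoded as `P : ℂ → Γ → ℝ` via `η ↦ η·z₀`), and `μ (γ) = P (γ·z₀, z₀)`.
For any compact metrizable `Γ`-space `X`, the restriction map `R : f ↦ (x ↦ f (z₀, x))`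
is a bijection from `Γ`-invariant leafwise harmonic functions (all of which are bounded)
onto continuous `μ`-harmonic functions on `X`; moreover `f` is independent of the disc
variable iff `R f` is `Γ`-invariant. -/
theorem discretization_foliated_bundle
    {Γ : Type*} [Group Γ] (ρ : Γ → ℂ → ℂ) (hΓ : IsCocompactFuchsian Γ ρ)
    (z₀ : ℂ) (hz₀ : z₀ ∈ unitDisc) (hfree : ∀ γ : Γ, ρ γ z₀ = z₀ → γ = 1)
    (P : ℂ → Γ → ℝ)
    (hP_range : ∀ p ∈ unitDisc, ∀ γ : Γ, 0 < P p γ ∧ P p γ < 1)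
    (hP_sum : ∀ p ∈ unitDisc, HasSum (P p) 1)
    (hP_compat : ∀ γ η : Γ, ∀ p ∈ unitDisc, P (ρ γ p) (γ * η) = P p η)
    (hP_extend : ∀ φ : Γ → ℝ, (∃ M : ℝ, ∀ γ : Γ, |φ γ| ≤ M) →
      (∀ γ : Γ, HasSum (fun η : Γ => P (ρ γ z₀) η * φ η) (φ γ)) →
      IsBoundedHarmonic (fun p => ∑' η : Γ, P p η * φ η) ∧
        ∀ γ : Γ, (∑' η : Γ, P (ρ γ z₀) η * φ η) = φ γ)
    (hP_restrict : ∀ H : ℂ → ℝ, IsBoundedHarmonic H →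
      ∀ p ∈ unitDisc, HasSum (fun η : Γ => P p η * H (ρ η z₀)) (H p))
    (μ : Γ → ℝ) (hμ : μ = fun γ => P (ρ γ z₀) 1)
    {X : Type*} [TopologicalSpace X] [CompactSpace X] [TopologicalSpace.MetrizableSpace X]
    (σ : Γ → X → X) (hσ : IsActionByHomeomorphisms Γ X σ) :
    -- `R` maps invariant leafwise harmonic functions (automatically bounded)
    -- to continuous `μ`-harmonic functions on `X`
    (∀ f : ℂ → X → ℝ, IsInvariantLeafwiseHarmonic ρ σ f →
      (∃ M : ℝ, ∀ z ∈ unitDisc, ∀ x : X, |f z x| ≤ M) ∧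
      Continuous (fun x : X => f z₀ x) ∧
      (∀ x : X, HasSum (fun γ : Γ => μ γ * f z₀ (σ γ x)) (f z₀ x))) ∧
    -- `R` is injective
    (∀ f₁ f₂ : ℂ → X → ℝ, IsInvariantLeafwiseHarmonic ρ σ f₁ →
      IsInvariantLeafwiseHarmonic ρ σ f₂ → (∀ x : X, f₁ z₀ x = f₂ z₀ x) →
      ∀ z ∈ unitDisc, ∀ x : X, f₁ z x = f₂ z x) ∧
    -- `R` is surjective onto continuous `μ`-harmonic functions
    (∀ Φ : X → ℝ, Continuous Φ →
      (∀ x : X, HasSum (fun γ : Γ => μ γ * Φ (σ γ x)) (Φ x)) →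
      ∃ f : ℂ → X → ℝ, IsInvariantLeafwiseHarmonic ρ σ f ∧ ∀ x : X, f z₀ x = Φ x) ∧
    -- `f` is independent of the disc variable iff `R f` is `Γ`-invariant
    (∀ f : ℂ → X → ℝ, IsInvariantLeafwiseHarmonic ρ σ f →
      ((∀ z ∈ unitDisc, ∀ x : X, f z x = f z₀ x) ↔
        (∀ (γ : Γ) (x : X), f z₀ (σ γ x) = f z₀ x))) := by
  classical
  -- basic facts
  have hμinv : ∀ γ : Γ, μ γ = P z₀ γ⁻¹ := by
    intro γ
    have h := hP_compat γ γ⁻¹ z₀ hz₀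
    rw [mul_inv_cancel] at h
    simp only [hμ]
    exact h
  have hσinv : ∀ (γ : Γ) (x : X), σ γ (σ γ⁻¹ x) = x := by
    intro γ x
    rw [← hσ.mul_act, mul_inv_cancel, hσ.one_act]
  -- boundedness of invariant leafwise harmonic functions
  have hbound : ∀ f : ℂ → X → ℝ, IsInvariantLeafwiseHarmonic ρ σ f →
      ∃ M : ℝ, ∀ z ∈ unitDisc, ∀ x : X, |f z x| ≤ M := by
    intro f hf
    obtain ⟨K, hKsub, hKcomp, hKcover⟩ := hΓ.cocompact
    have hKXcomp : IsCompact (K ×ˢ (univ : Set X)) := hKcomp.prod isCompact_univ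
    have himg : IsCompact ((fun p : ℂ × X => f p.1 p.2) '' (K ×ˢ (univ : Set X))) :=
      hKXcomp.image_of_continuousOn (hf.1.mono (prod_mono hKsub (subset_refl _)))
    obtain ⟨M, hM⟩ := isBounded_iff_forall_norm_le.mp himg.isBounded
    refine ⟨M, fun z hz x => ?_⟩
    obtain ⟨γ, hγ⟩ := hKcover z hz
    have h1 : f (ρ γ z) (σ γ x) = f z x := hf.2.2 γ z hz x
    have h2 : f (ρ γ z) (σ γ x) ∈ (fun p : ℂ × X => f p.1 p.2) '' (K ×ˢ (univ : Set X)) :=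
      ⟨(ρ γ z, σ γ x), mk_mem_prod hγ (mem_univ _), rfl⟩
    have := hM _ h2
    rw [Real.norm_eq_abs] at this
    rwa [h1] at this
  -- per-leaf bounded harmonicity
  have hbh : ∀ f : ℂ → X → ℝ, IsInvariantLeafwiseHarmonic ρ σ f → ∀ x : X,
      IsBoundedHarmonic (fun p => f p x) := by
    intro f hf x
    obtain ⟨M, hM⟩ := hbound f hf
    exact ⟨hf.2.1 x, M, fun z hz => hM z hz x⟩
  -- value of invariant functions on the orbit
  have hfval : ∀ f : ℂ → X → ℝ, IsInvariantLeafwiseHarmonic ρ σ f →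
      ∀ (η : Γ) (x : X), f (ρ η z₀) x = f z₀ (σ η⁻¹ x) := by
    intro f hf η x
    have := hf.2.2 η z₀ hz₀ (σ η⁻¹ x)
    rwa [hσinv η x] at this
  -- the μ-harmonicity of restrictions
  have hRharm : ∀ f : ℂ → X → ℝ, IsInvariantLeafwiseHarmonic ρ σ f →
      ∀ x : X, HasSum (fun γ : Γ => μ γ * f z₀ (σ γ x)) (f z₀ x) := by
    intro f hf x
    have key := hP_restrict (fun p => f p x) (hbh f hf x) z₀ hz₀
    have key2 : HasSum (fun η : Γ => P z₀ η * f z₀ (σ η⁻¹ x)) (f z₀ x) := by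
      convert key using 2 with η
      show P z₀ η * f z₀ (σ η⁻¹ x) = P z₀ η * f (ρ η z₀) x
      rw [hfval f hf η x]
    have key3 := (Equiv.inv Γ).hasSum_iff.mpr key2
    convert key3 using 2 with γ
    simp only [Function.comp_apply, Equiv.inv_apply, inv_inv]
    rw [hμinv γ]
  refine ⟨fun f hf => ⟨hbound f hf, ?_, hRharm f hf⟩, ?_, ?_, ?_⟩
  -- continuity of the restriction
  · exact hf.1.comp_continuous (continuous_const.prodMk continuous_id)
      (fun x => mk_mem_prod hz₀ (mem_univ x))
  -- injectivity
  · intro f₁ f₂ hf₁ hf₂ heq z hz x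
    have h1 := hP_restrict (fun p => f₁ p x) (hbh f₁ hf₁ x) z hz
    have h2 := hP_restrict (fun p => f₂ p x) (hbh f₂ hf₂ x) z hz
    have h3 : (fun η : Γ => P z η * f₁ (ρ η z₀) x) = fun η : Γ => P z η * f₂ (ρ η z₀) x := by
      funext η
      rw [hfval f₁ hf₁ η x, hfval f₂ hf₂ η x, heq]
    rw [h3] at h1
    exact h1.unique h2
  -- surjectivity
  · intro Φ hΦ hΦharm
    obtain ⟨M₀, hM₀⟩ : ∃ M₀ : ℝ, ∀ x : X, |Φ x| ≤ M₀ := by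
      have himg : IsCompact (Φ '' univ) := isCompact_univ.image_of_continuousOn hΦ.continuousOn
      obtain ⟨C, hC⟩ := isBounded_iff_forall_norm_le.mp himg.isBounded
      exact ⟨C, fun x => by
        have := hC (Φ x) ⟨x, mem_univ x, rfl⟩
        rwa [Real.norm_eq_abs] at this⟩
    -- the P-harmonic function on the orbit associated to x
    have hφharm : ∀ x : X, ∀ γ : Γ,
        HasSum (fun η : Γ => P (ρ γ z₀) η * Φ (σ η⁻¹ x)) (Φ (σ γ⁻¹ x)) := by
      intro x γ
      have key := hΦharm (σ γ⁻¹ x)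
      set e : Γ ≃ Γ := (Equiv.inv Γ).trans (Equiv.mulLeft γ) with he
      apply e.hasSum_iff.mp
      convert key using 2 with δ
      have h1 : e δ = γ * δ⁻¹ := by simp [he]
      rw [Function.comp_apply, h1]
      rw [hP_compat γ δ⁻¹ z₀ hz₀, ← hμinv δ]
      congr 1
      rw [← hσ.mul_act]
      congr 1
      group
    have hext : ∀ x : X,
        IsBoundedHarmonic (fun p => ∑' η : Γ, P p η * Φ (σ η⁻¹ x)) ∧
        ∀ γ : Γ, (∑' η : Γ, P (ρ γ z₀) η * Φ (σ η⁻¹ x)) = Φ (σ γ⁻¹ x) := by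
      intro x
      exact hP_extend (fun η => Φ (σ η⁻¹ x)) ⟨M₀, fun γ => hM₀ _⟩ (hφharm x)
    set f : ℂ → X → ℝ := fun z x => ∑' η : Γ, P z η * Φ (σ η⁻¹ x) with hfdef
    have hfz₀ : ∀ x : X, f z₀ x = Φ x := by
      intro x
      have := (hext x).2 1
      rw [hΓ.one_act z₀ hz₀] at this
      rw [hfdef]
      simp only []
      rw [this, inv_one, hσ.one_act]
    have hfbound : ∀ x : X, ∀ z ∈ unitDisc, |f z x| ≤ M₀ := by
      intro x z hz
      have hsum1 : HasSum (fun η : Γ => P z η * M₀) (1 * M₀) := (hP_sum z hz).mul_right M₀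
      have := tsum_of_norm_bounded (f := fun η : Γ => P z η * Φ (σ η⁻¹ x)) hsum1 (fun η => by
        rw [Real.norm_eq_abs, abs_mul, abs_of_pos (hP_range z hz η).1]
        exact mul_le_mul_of_nonneg_left (hM₀ _) (hP_range z hz η).1.le)
      rw [one_mul] at this
      rwa [Real.norm_eq_abs] at this
    have hfharm : ∀ x : X, HarmonicOnSet (fun z => f z x) unitDisc := fun x => (hext x).1.1
    have hfinv : ∀ γ : Γ, ∀ z ∈ unitDisc, ∀ x : X, f (ρ γ z) (σ γ x) = f z x := by
      intro γ z hz x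
      rw [hfdef]
      simp only []
      rw [← Equiv.tsum_eq (Equiv.mulLeft γ) (fun η => P (ρ γ z) η * Φ (σ η⁻¹ (σ γ x)))]
      congr 1
      funext δ
      simp only [Equiv.coe_mulLeft]
      rw [hP_compat γ δ z hz]
      congr 1
      rw [← hσ.mul_act]
      congr 1
      group
    -- continuity in x for fixed z
    have hcontx : ∀ z ∈ unitDisc, Continuous (fun x => f z x) := by
      intro z hz
      apply continuous_tsum (u := fun η => P z η * M₀)
      · exact fun η => continuous_const.mul (hΦ.comp (hσ.continuous_act η⁻¹))
      · exact ((hP_sum z hz).mul_right M₀).summable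
      · intro η x
        rw [Real.norm_eq_abs, abs_mul, abs_of_pos (hP_range z hz η).1]
        exact mul_le_mul_of_nonneg_left (hM₀ _) (hP_range z hz η).1.le
    -- joint continuity
    have hcont : ContinuousOn (fun p : ℂ × X => f p.1 p.2) (unitDisc ×ˢ (univ : Set X)) := by
      intro q hq
      obtain ⟨hq1, _⟩ := mem_prod.mp hq
      apply ContinuousAt.continuousWithinAt
      set z₁ := q.1
      set x₁ := q.2
      set R : ℝ := 1 - dist z₁ 0 with hRdef
      have hz₁lt : dist z₁ 0 < 1 := by rwa [unitDisc, mem_ball] at hq1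
      have hRpos : 0 < R := by rw [hRdef]; linarith
      have hRsub : ball z₁ R ⊆ unitDisc := by
        intro w hw
        rw [mem_ball] at hw
        rw [unitDisc, mem_ball]
        calc dist w 0 ≤ dist w z₁ + dist z₁ 0 := dist_triangle _ _ _
          _ < R + dist z₁ 0 := by linarith
          _ = 1 := by rw [hRdef]; ring
      set L : ℝ := Real.exp (2*M₀+1) * (4 / R) with hLdef
      have hLpos : 0 < L := by
        rw [hLdef]; positivity
      have hcx1 : Continuous (fun x => f z₁ x) := hcontx z₁ hq1
      rw [ContinuousAt, tendsto_iff_dist_tendsto_zero]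
      have hbndtends : Tendsto (fun p : ℂ × X => L * dist p.1 z₁ + dist (f z₁ p.2) (f z₁ x₁))
          (nhds (z₁, x₁)) (nhds 0) := by
        have hc : Continuous (fun p : ℂ × X => L * dist p.1 z₁ + dist (f z₁ p.2) (f z₁ x₁)) :=
          (continuous_const.mul (continuous_fst.dist continuous_const)).add
            ((hcx1.comp continuous_snd).dist continuous_const)
        have := hc.tendsto (z₁, x₁)
        simpa using this
      apply squeeze_zero' (Eventually.of_forall (fun p => dist_nonneg)) _ hbndtends
      have hmem : {p : ℂ × X | p.1 ∈ ball z₁ (R/8)} ∈ nhds (z₁, x₁) :=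
        (isOpen_ball.preimage continuous_fst).mem_nhds (mem_ball_self (by linarith))
      filter_upwards [hmem] with p hp
      have hlip := harmonic_lipschitz (hfharm p.2) (fun w hw => hfbound p.2 w hw) hRpos hRsub
        hp (mem_ball_self (by linarith))
      calc dist (f p.1 p.2) (f z₁ x₁)
          ≤ dist (f p.1 p.2) (f z₁ p.2) + dist (f z₁ p.2) (f z₁ x₁) := dist_triangle _ _ _
        _ ≤ L * dist p.1 z₁ + dist (f z₁ p.2) (f z₁ x₁) := by
            apply add_le_add_left
            rw [Real.dist_eq]
            rw [hLdef]
            exact hlip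
      -- done
    exact ⟨f, ⟨hcont, hfharm, hfinv⟩, hfz₀⟩
  -- constancy criterion
  · intro f hf
    constructor
    · intro hconst γ x
      have h1 : f (ρ γ z₀) (σ γ x) = f z₀ x := hf.2.2 γ z₀ hz₀ x
      have h2 : f (ρ γ z₀) (σ γ x) = f z₀ (σ γ x) :=
        hconst (ρ γ z₀) (hΓ.maps_disc γ z₀ hz₀) (σ γ x)
      rw [← h2, h1]
    · intro hinv z hz x
      have h1 := hP_restrict (fun p => f p x) (hbh f hf x) z hz
      have h2 : (fun η : Γ => P z η * f (ρ η z₀) x) = fun η : Γ => P z η * f z₀ x := by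
        funext η
        rw [hfval f hf η x, hinv η⁻¹ x]
      rw [h2] at h1
      have h3 : HasSum (fun η : Γ => P z η * f z₀ x) (1 * f z₀ x) :=
        (hP_sum z hz).mul_right _
      have h4 : f z x = 1 * f z₀ x := h1.unique h3
      rw [h4, one_mul]
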